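/- Let s and t be integers with t ≥ s ≥ 2 and set q = st - s - t + 3. Then there exist constants c₁ > 0, c₂ > 0, C > 0 and a natural number n₀ such that for all n ≥ n₀: c₁·n ≤ r(K_{n,n}, K_{s,t}, q) ≤ c₂·n, and r(K_{n,n}, K_{s,t}, q-1) ≤ C·n^{1 - 1/(s+t-1)}. (That is, r(K_{n,n}, K_{s,t}, st-s-t+3) = Θ(n) and r(K_{n,n}, K_{s,t}, st-s-t+2) = O(n^{1-1/(s+t-1)}).) -/

import Mathlib

open Finset


section LLLCore
variable {V : Type*} [Fintype V] [DecidableEq V] {K : Type*} [Fintype K] [DecidableEq K]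

/-- `P` depends only on coordinates in `U`. -/
def DepOn (P : (V → K) → Prop) (U : Finset V) : Prop :=
  ∀ ω ω' : V → K, (∀ v ∈ U, ω v = ω' v) → (P ω ↔ P ω')

lemma indep_count (P Q : (V → K) → Prop) [DecidablePred P] [DecidablePred Q]
    {U W : Finset V} (hP : DepOn P U) (hQ : DepOn Q W) (hUW : Disjoint U W) :
    (univ.filter fun ω => P ω ∧ Q ω).card * Fintype.card (V → K)
      = (univ.filter P).card * (univ.filter Q).card := by
  classical
  have key : ((univ.filter fun ω => P ω ∧ Q ω) ×ˢ (univ : Finset (V → K))).card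
      = ((univ.filter P) ×ˢ (univ.filter Q)).card := by
    apply Finset.card_bij'
      (i := fun p _ => (((fun v => if v ∈ U then p.1 v else p.2 v) : V → K),
                        ((fun v => if v ∈ U then p.2 v else p.1 v) : V → K)))
      (j := fun p _ => (((fun v => if v ∈ U then p.1 v else p.2 v) : V → K),
                        ((fun v => if v ∈ U then p.2 v else p.1 v) : V → K)))
    · intro p hp
      simp only [Finset.mem_product, Finset.mem_filter, Finset.mem_univ, true_and] at hp ⊢
      obtain ⟨hPp, hQp⟩ := hp.1
      constructor
      · exact (hP _ p.1 (fun v hv => by simp [hv])).mpr hPp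
      · refine (hQ _ p.1 (fun v hv => ?_)).mpr hQp
        have : v ∉ U := Finset.disjoint_right.mp hUW hv
        simp [this]
    · intro p hp
      simp only [Finset.mem_product, Finset.mem_filter, Finset.mem_univ, true_and, and_true] at hp ⊢
      obtain ⟨hPp, hQp⟩ := hp
      constructor
      · exact (hP _ p.1 (fun v hv => by simp [hv])).mpr hPp
      · refine (hQ _ p.2 (fun v hv => ?_)).mpr hQp
        have : v ∉ U := Finset.disjoint_right.mp hUW hv
        simp [this]
    · intro p hp
      ext v <;> by_cases hv : v ∈ U <;> simp [hv]
    · intro p hp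
      ext v <;> by_cases hv : v ∈ U <;> simp [hv]
  rw [Finset.card_product, Finset.card_product, Finset.card_univ] at key
  exact key

lemma cond_count (Q : (V → K) → Prop) [DecidablePred Q] {v u : V} (huv : u ≠ v)
    (hQ : DepOn Q (univ.erase v)) :
    (univ.filter fun ω => Q ω ∧ ω v = ω u).card * Fintype.card K = (univ.filter Q).card := by
  classical
  have key : ((univ.filter fun ω => Q ω ∧ ω v = ω u) ×ˢ (univ : Finset K)).card
      = (univ.filter Q).card := by
    refine Finset.card_bij' (fun p _ => Function.update p.1 v p.2)
      (fun ω _ => (Function.update ω v (ω u), ω v)) ?hi ?hj ?li ?ri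
    case hi =>
      intro p hp
      simp only [Finset.mem_product, Finset.mem_filter, Finset.mem_univ, true_and, and_true] at hp
      simp only [Finset.mem_filter, Finset.mem_univ, true_and]
      refine (hQ _ p.1 (fun w hw => ?_)).mpr hp.1
      exact Function.update_of_ne (Finset.mem_erase.mp hw).1 _ _
    case hj =>
      intro ω hω
      simp only [Finset.mem_filter, Finset.mem_univ, true_and] at hω
      simp only [Finset.mem_product, Finset.mem_filter, Finset.mem_univ, true_and, and_true]
      refine ⟨(hQ _ ω (fun w hw => Function.update_of_ne (Finset.mem_erase.mp hw).1 _ _)).mpr hω, ?_⟩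
      rw [Function.update_self, Function.update_of_ne huv]
    case li =>
      rintro ⟨f, cc⟩ hp
      simp only [Finset.mem_product, Finset.mem_filter, Finset.mem_univ, true_and, and_true] at hp
      obtain ⟨hQ1, heq⟩ := hp
      simp only [Prod.mk.injEq]
      constructor
      · rw [Function.update_of_ne huv, Function.update_idem, ← heq, Function.update_eq_self]
      · exact Function.update_self _ _ _
    case ri =>
      intro ω hω
      show Function.update (Function.update ω v (ω u)) v (ω v) = ω
      rw [Function.update_idem, Function.update_eq_self]
  rw [Finset.card_product, Finset.card_univ] at key
  exact key

end LLLCore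

section LLLCore2
variable {V : Type*} [Fintype V] [DecidableEq V] {K : Type*} [Fintype K] [DecidableEq K]

lemma count_constraints {m : ℕ} (f : V → ℕ) (hf : Function.Injective f) (src tgt : Fin m → V)
    (hinj : Function.Injective src) (hlt : ∀ r, f (tgt r) < f (src r)) (R : Finset (Fin m)) :
    (univ.filter fun ω : V → K => ∀ r ∈ R, ω (src r) = ω (tgt r)).card
      * Fintype.card K ^ R.card = Fintype.card (V → K) := by
  classical
  induction R using Finset.strongInduction with
  | _ R ih =>
    rcases R.eq_empty_or_nonempty with rfl | hne
    · simp
    · obtain ⟨r₀, hr₀R, hmax⟩ := Finset.exists_max_image R (fun r => f (src r)) hne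
      set R' := R.erase r₀ with hR'
      have hssub : R' ⊂ R := Finset.erase_ssubset hr₀R
      have hcard : R.card = R'.card + 1 := by
        rw [hR', Finset.card_erase_of_mem hr₀R]
        have := Finset.card_pos.mpr hne
        omega
      have hQdep : DepOn (fun ω : V → K => ∀ r ∈ R', ω (src r) = ω (tgt r))
          (univ.erase (src r₀)) := by
        intro ω ω' hag
        have hval : ∀ r ∈ R', ω (src r) = ω' (src r) ∧ ω (tgt r) = ω' (tgt r) := by
          intro r hr
          obtain ⟨hrne, hrR⟩ := Finset.mem_erase.mp hr
          constructor
          · exact hag _ (Finset.mem_erase.mpr ⟨fun h => hrne (hinj h), Finset.mem_univ _⟩)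
          · refine hag _ (Finset.mem_erase.mpr ⟨?_, Finset.mem_univ _⟩)
            intro heq
            have h1 := hlt r
            have h2 := hmax r hrR
            rw [heq] at h1
            omega
        constructor
        · intro h r hr; rw [← (hval r hr).1, ← (hval r hr).2]; exact h r hr
        · intro h r hr; rw [(hval r hr).1, (hval r hr).2]; exact h r hr
      have hsplit : (univ.filter fun ω : V → K => ∀ r ∈ R, ω (src r) = ω (tgt r))
          = (univ.filter fun ω : V → K =>
              (∀ r ∈ R', ω (src r) = ω (tgt r)) ∧ ω (src r₀) = ω (tgt r₀)) := by
        apply Finset.filter_congr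
        intro ω _
        constructor
        · intro h
          exact ⟨fun r hr => h r (Finset.mem_erase.mp hr).2, h r₀ hr₀R⟩
        · intro h r hr
          rcases eq_or_ne r r₀ with rfl | hne'
          · exact h.2
          · exact h.1 r (Finset.mem_erase.mpr ⟨hne', hr⟩)
      have hne' : tgt r₀ ≠ src r₀ := by
        intro heq
        have := hlt r₀
        rw [heq] at this
        omega
      have hcond := cond_count (V := V) (K := K)
        (fun ω : V → K => ∀ r ∈ R', ω (src r) = ω (tgt r))
        hne' hQdep
      have hih := ih R' hssub
      calc (univ.filter fun ω : V → K => ∀ r ∈ R, ω (src r) = ω (tgt r)).card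
            * Fintype.card K ^ R.card
          = ((univ.filter fun ω : V → K =>
              (∀ r ∈ R', ω (src r) = ω (tgt r)) ∧ ω (src r₀) = ω (tgt r₀)).card
            * Fintype.card K) * Fintype.card K ^ R'.card := by
            rw [hsplit, hcard, pow_succ]; ring
        _ = (univ.filter fun ω : V → K => ∀ r ∈ R', ω (src r) = ω (tgt r)).card
            * Fintype.card K ^ R'.card := by rw [hcond]
        _ = Fintype.card (V → K) := hih

lemma pow_two_d_le (d h : ℕ) (hd : 1 ≤ d) (hh : h ≤ d) : (2*d)^h ≤ 2*(2*d-1)^h := by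
  have hdR : (1:ℝ) ≤ (d:ℝ) := by exact_mod_cast hd
  have hpos : (0:ℝ) < 2*(d:ℝ) - 1 := by linarith
  have hb : ((2*(d:ℝ) - 1) / (2*(d:ℝ)))^d ≥ 1/2 := by
    have h2d : (0:ℝ) < 2*(d:ℝ) := by linarith
    have hsmall : 1/(2*(d:ℝ)) ≤ 1 := by
      rw [div_le_one h2d]; linarith
    have hber := one_add_mul_le_pow (a := -(1/(2*(d:ℝ)))) (by linarith) d
    have heq : (1 + -(1/(2*(d:ℝ))))^d = ((2*(d:ℝ) - 1) / (2*(d:ℝ)))^d := by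
      congr 1
      field_simp
      ring
    rw [heq] at hber
    have : (1:ℝ) + (d:ℝ) * -(1/(2*(d:ℝ))) = 1/2 := by
      field_simp
      ring
    linarith [hber, this.symm.le]
  have hratio : ((2*(d:ℝ)) / (2*(d:ℝ) - 1))^h ≤ 2 := by
    have h1 : (1:ℝ) ≤ (2*(d:ℝ)) / (2*(d:ℝ) - 1) := by
      rw [le_div_iff₀ hpos]; linarith
    have h2 : ((2*(d:ℝ)) / (2*(d:ℝ) - 1))^h ≤ ((2*(d:ℝ)) / (2*(d:ℝ) - 1))^d :=
      pow_le_pow_right₀ h1 hh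
    have h3 : ((2*(d:ℝ)) / (2*(d:ℝ) - 1))^d * ((2*(d:ℝ) - 1) / (2*(d:ℝ)))^d = 1 := by
      rw [← mul_pow]
      rw [div_mul_div_comm]
      rw [mul_comm (2*(d:ℝ))]
      rw [div_self (by positivity)]
      simp
    have h4 : ((2*(d:ℝ)) / (2*(d:ℝ) - 1))^d ≤ 2 := by
      nlinarith [pow_pos (by positivity : (0:ℝ) < (2*(d:ℝ)) / (2*(d:ℝ) - 1)) d]
    linarith
  have hfin : ((2*d:ℕ):ℝ)^h ≤ 2*(((2*d-1:ℕ)):ℝ)^h := by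
    have hc : ((2*d-1:ℕ):ℝ) = 2*(d:ℝ) - 1 := by
      have : (1:ℕ) ≤ 2*d := by omega
      push_cast [Nat.cast_sub this]
      ring
    have hc2 : ((2*d:ℕ):ℝ) = 2*(d:ℝ) := by push_cast; ring
    rw [hc, hc2]
    have expand : (2*(d:ℝ))^h = ((2*(d:ℝ)) / (2*(d:ℝ) - 1))^h * (2*(d:ℝ) - 1)^h := by
      rw [← mul_pow, div_mul_cancel₀]
      exact ne_of_gt hpos
    rw [expand]
    have := pow_pos hpos h
    nlinarith [hratio, pow_pos hpos h]
  exact_mod_cast hfin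

end LLLCore2
section LLLMain
variable {V : Type*} [Fintype V] [DecidableEq V] {K : Type*} [Fintype K] [DecidableEq K]

lemma LLL {I : Type*} [Fintype I] [DecidableEq I] (vbl : I → Finset V)
    (Pr : I → (V → K) → Prop) [∀ i, DecidablePred (Pr i)]
    (hdep : ∀ i, DepOn (Pr i) (vbl i)) (d : ℕ) (hd : 1 ≤ d)
    (hdeg : ∀ i : I, (univ.filter fun j => ¬ Disjoint (vbl i) (vbl j)).card ≤ d)
    (hK : Nonempty K)
    (hp : ∀ i, 4*d*(univ.filter (Pr i)).card ≤ Fintype.card (V → K)) :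
    ∃ ω : V → K, ∀ i, ¬ Pr i ω := by
  classical
  set A : Finset I → ℕ := fun S => (univ.filter fun ω : V → K => ∀ j ∈ S, ¬ Pr j ω).card with hA
  have hΩpos : 0 < Fintype.card (V → K) := by
    have : Nonempty (V → K) := ⟨fun _ => hK.some⟩
    exact Fintype.card_pos
  -- splitting identity
  have split : ∀ (j : I) (U : Finset I),
      (univ.filter fun ω : V → K => Pr j ω ∧ ∀ l ∈ U, ¬ Pr l ω).card + A (insert j U) = A U := by
    intro j U
    have h1 : A (insert j U) = (univ.filter fun ω : V → K => (∀ l ∈ U, ¬ Pr l ω) ∧ ¬ Pr j ω).card := by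
      simp only [hA]
      congr 1
      apply Finset.filter_congr
      intro ω _
      simp only [Finset.mem_insert]
      constructor
      · intro h; exact ⟨fun l hl => h l (Or.inr hl), h j (Or.inl rfl)⟩
      · rintro ⟨h1, h2⟩ l (rfl | hl)
        · exact h2
        · exact h1 l hl
    have h2 : (univ.filter fun ω : V → K => Pr j ω ∧ ∀ l ∈ U, ¬ Pr l ω).card
        = (univ.filter fun ω : V → K => (∀ l ∈ U, ¬ Pr l ω) ∧ Pr j ω).card := by
      congr 1
      apply Finset.filter_congr
      intro ω _
      exact ⟨fun h => ⟨h.2, h.1⟩, fun h => ⟨h.2, h.1⟩⟩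
    rw [h1, h2]
    simp only [hA]
    have := Finset.card_filter_add_card_filter_not
      (s := univ.filter fun ω : V → K => ∀ l ∈ U, ¬ Pr l ω) (p := fun ω => Pr j ω)
    rw [Finset.filter_filter, Finset.filter_filter] at this
    exact this
  -- avoid-set depends only on union of vbls
  have avoidDep : ∀ (U : Finset I), DepOn (fun ω : V → K => ∀ j ∈ U, ¬ Pr j ω) (U.biUnion vbl) := by
    intro U ω ω' hag
    have : ∀ j ∈ U, Pr j ω ↔ Pr j ω' := by
      intro j hj
      exact hdep j ω ω' (fun v hv => hag v (Finset.mem_biUnion.mpr ⟨j, hj, hv⟩))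
    constructor
    · intro h j hj hPr; exact h j hj ((this j hj).mpr hPr)
    · intro h j hj hPr; exact h j hj ((this j hj).mp hPr)
  -- main induction
  have key : ∀ m : ℕ, ∀ S : Finset I, S.card ≤ m → ∀ i,
      2*d*((univ.filter fun ω : V → K => Pr i ω ∧ ∀ j ∈ S, ¬ Pr j ω).card) ≤ A S := by
    intro m
    induction m with
    | zero =>
      intro S hS i
      have hSe : S = ∅ := Finset.card_eq_zero.mp (Nat.le_antisymm hS (Nat.zero_le _))
      subst hSe
      have e1 : (univ.filter fun ω : V → K => Pr i ω ∧ ∀ j ∈ (∅ : Finset I), ¬ Pr j ω)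
          = univ.filter (Pr i) := by
        apply Finset.filter_congr; intro ω _; simp
      have e2 : A ∅ = Fintype.card (V → K) := by
        simp only [hA]; simp
      rw [e1, e2]
      calc 2*d*(univ.filter (Pr i)).card ≤ 4*d*(univ.filter (Pr i)).card := by
            apply Nat.mul_le_mul_right; omega
        _ ≤ Fintype.card (V → K) := hp i
    | succ m ih =>
      intro S hS i
      by_cases hc : S.card ≤ m
      · exact ih S hc i
      have hScard : S.card = m+1 := by omega
      set S₁ := S.filter (fun j => ¬ Disjoint (vbl i) (vbl j)) with hS₁
      set S₂ := S \ S₁ with hS₂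
      have hS₁sub : S₁ ⊆ S := Finset.filter_subset _ _
      have hunion : S₂ ∪ S₁ = S := Finset.sdiff_union_of_subset hS₁sub
      have hdisj2 : Disjoint (vbl i) (S₂.biUnion vbl) := by
        rw [Finset.disjoint_biUnion_right]
        intro j hj
        rw [hS₂, Finset.mem_sdiff, hS₁, Finset.mem_filter] at hj
        by_contra hcon
        exact hj.2 ⟨hj.1, hcon⟩
      have hind := indep_count (Pr i) (fun ω : V → K => ∀ j ∈ S₂, ¬ Pr j ω)
        (hdep i) (avoidDep S₂) hdisj2
      -- step A: 4d · cnt(Pr i ∧ avoid S₂) ≤ A S₂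
      have h4 : 4*d*(univ.filter fun ω : V → K => Pr i ω ∧ ∀ j ∈ S₂, ¬ Pr j ω).card ≤ A S₂ := by
        have h1 : (4*d*(univ.filter fun ω : V → K => Pr i ω ∧ ∀ j ∈ S₂, ¬ Pr j ω).card)
            * Fintype.card (V → K)
            = (4*d*(univ.filter (Pr i)).card) * A S₂ := by
          simp only [hA]
          rw [mul_assoc, hind]; ring
        have h2 : (4*d*(univ.filter (Pr i)).card) * A S₂ ≤ Fintype.card (V → K) * A S₂ :=
          Nat.mul_le_mul_right _ (hp i)
        have h3 : (4*d*(univ.filter fun ω : V → K => Pr i ω ∧ ∀ j ∈ S₂, ¬ Pr j ω).card)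
            * Fintype.card (V → K) ≤ (A S₂) * Fintype.card (V → K) := by
          rw [h1]; rw [Nat.mul_comm (A S₂)]; exact h2
        exact Nat.le_of_mul_le_mul_right h3 hΩpos
      -- chain
      have hchain : ∀ T : Finset I, T ⊆ S₁ →
          (2*d-1)^T.card * A S₂ ≤ (2*d)^T.card * A (S₂ ∪ T) := by
        intro T
        induction T using Finset.induction with
        | empty => intro _; simp
        | @insert j T hjT ihT =>
          intro hsub
          have hT : T ⊆ S₁ := fun x hx => hsub (Finset.mem_insert_of_mem hx)
          have hjS₁ : j ∈ S₁ := hsub (Finset.mem_insert_self _ _)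
          have hjS : j ∈ S := hS₁sub hjS₁
          have hjS₂ : j ∉ S₂ := by
            rw [hS₂, Finset.mem_sdiff]; tauto
          have hjcup : j ∉ S₂ ∪ T := by
            rw [Finset.mem_union]; tauto
          have hsubS : S₂ ∪ T ⊆ S := by
            apply Finset.union_subset
            · exact Finset.sdiff_subset
            · exact fun x hx => hS₁sub (hT hx)
          have hlt : (S₂ ∪ T).card ≤ m := by
            have : S₂ ∪ T ⊂ S := Finset.ssubset_iff_of_subset hsubS |>.mpr ⟨j, hjS, hjcup⟩
            have := Finset.card_lt_card this
            omega
          have hstep := ih (S₂ ∪ T) hlt j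
          have hsplit := split j (S₂ ∪ T)
          -- (2d-1) * A (S₂∪T) ≤ 2d * A (insert j (S₂∪T))
          have hone : (2*d-1) * A (S₂ ∪ T) ≤ (2*d) * A (insert j (S₂ ∪ T)) := by
            set x := (univ.filter fun ω : V → K => Pr j ω ∧ ∀ l ∈ S₂ ∪ T, ¬ Pr l ω).card
            set y := A (S₂ ∪ T)
            set z := A (insert j (S₂ ∪ T))
            -- x + z = y, 2d·x ≤ y ⊢ (2d-1)y ≤ 2d·z
            have hxy : x + z = y := hsplit
            have h2dx : 2*d*x ≤ y := hstep
            have e1 : (2*d-1) * y = 2*d*y - y := by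
              have : 1 ≤ 2*d := by omega
              rw [Nat.sub_mul, Nat.one_mul]
            have e2 : 2*d*z = 2*d*y - 2*d*x := by
              rw [← hxy]; rw [Nat.mul_add]; omega
            rw [e1, e2]
            have : y ≥ 2*d*x := h2dx
            apply Nat.sub_le_sub_left
            omega
          have hins : S₂ ∪ insert j T = insert j (S₂ ∪ T) := by
            rw [Finset.union_insert]
          rw [hins, Finset.card_insert_of_notMem hjT]
          calc (2*d-1)^(T.card+1) * A S₂ = (2*d-1) * ((2*d-1)^T.card * A S₂) := by ring
            _ ≤ (2*d-1) * ((2*d)^T.card * A (S₂ ∪ T)) := Nat.mul_le_mul_left _ (ihT hT)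
            _ = (2*d)^T.card * ((2*d-1) * A (S₂ ∪ T)) := by ring
            _ ≤ (2*d)^T.card * ((2*d) * A (insert j (S₂ ∪ T))) := Nat.mul_le_mul_left _ hone
            _ = (2*d)^(T.card+1) * A (insert j (S₂ ∪ T)) := by ring
      have hchainS := hchain S₁ (Finset.Subset.refl _)
      rw [hunion] at hchainS
      have hS1card : S₁.card ≤ d := by
        refine le_trans (Finset.card_le_card ?_) (hdeg i)
        intro j hj
        rw [hS₁, Finset.mem_filter] at hj
        exact Finset.mem_filter.mpr ⟨Finset.mem_univ _, hj.2⟩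
      have hpow := pow_two_d_le d S₁.card hd hS1card
      have hA2 : A S₂ ≤ 2 * A S := by
        have hb : (2*d-1)^S₁.card * A S₂ ≤ (2*d-1)^S₁.card * (2 * A S) := by
          calc (2*d-1)^S₁.card * A S₂ ≤ (2*d)^S₁.card * A S := hchainS
            _ ≤ (2*(2*d-1)^S₁.card) * A S := Nat.mul_le_mul_right _ hpow
            _ = (2*d-1)^S₁.card * (2 * A S) := by ring
        have hposp : 0 < (2*d-1)^S₁.card := by
          apply Nat.pow_pos
          omega
        exact Nat.le_of_mul_le_mul_left hb hposp
      have hmono : (univ.filter fun ω : V → K => Pr i ω ∧ ∀ j ∈ S, ¬ Pr j ω).card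
          ≤ (univ.filter fun ω : V → K => Pr i ω ∧ ∀ j ∈ S₂, ¬ Pr j ω).card := by
        apply Finset.card_le_card
        apply Finset.monotone_filter_right
        intro ω _ hω
        exact ⟨hω.1, fun j hj => hω.2 j (Finset.mem_sdiff.mp hj).1⟩
      calc 2*d*(univ.filter fun ω : V → K => Pr i ω ∧ ∀ j ∈ S, ¬ Pr j ω).card
          ≤ 2*d*(univ.filter fun ω : V → K => Pr i ω ∧ ∀ j ∈ S₂, ¬ Pr j ω).card :=
            Nat.mul_le_mul_left _ hmono
        _ ≤ A S := by
            have h5 : 4*d*(univ.filter fun ω : V → K => Pr i ω ∧ ∀ j ∈ S₂, ¬ Pr j ω).card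
                ≤ 2 * A S := le_trans h4 hA2
            have h6 : 2*(2*d*(univ.filter fun ω : V → K => Pr i ω ∧ ∀ j ∈ S₂, ¬ Pr j ω).card)
                = 4*d*(univ.filter fun ω : V → K => Pr i ω ∧ ∀ j ∈ S₂, ¬ Pr j ω).card := by ring
            have h7 : 2*(2*d*(univ.filter fun ω : V → K => Pr i ω ∧ ∀ j ∈ S₂, ¬ Pr j ω).card)
                ≤ 2*(A S) := by rw [h6]; exact h5
            exact Nat.le_of_mul_le_mul_left h7 (by omega)
  -- positivity
  have pos : ∀ S : Finset I, 0 < A S := by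
    intro S
    induction S using Finset.induction with
    | empty =>
      simp only [hA]; simpa using hΩpos
    | @insert j T hjT ihT =>
      have hk := key T.card T le_rfl j
      have hsplit := split j T
      by_contra hcon
      push_neg at hcon
      have hz : A (insert j T) = 0 := Nat.le_antisymm hcon (Nat.zero_le _)
      rw [hz, Nat.add_zero] at hsplit
      rw [hsplit] at hk
      have h2 : 2 * A T ≤ 2*d*(A T) := by
        apply Nat.mul_le_mul_right
        omega
      have h4 := le_trans h2 hk
      omega
  have hfinal := pos Finset.univ
  rw [hA] at hfinal
  obtain ⟨ω, hω⟩ := Finset.card_pos.mp hfinal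
  rw [Finset.mem_filter] at hω
  exact ⟨ω, fun i => hω.2 i (Finset.mem_univ _)⟩

end LLLMain
namespace EG

abbrev Cell (n : ℕ) := Fin n × Fin n

def cellOrd {n : ℕ} (x : Cell n) : ℕ := (finProdFinEquiv x : Fin (n*n)).val

lemma cellOrd_inj {n : ℕ} : Function.Injective (cellOrd (n := n)) := by
  intro x y h
  exact finProdFinEquiv.injective (Fin.val_injective h)

abbrev WT (s t D : ℕ) := (Fin D × Bool) × Bool × (Fin D → (Fin s × Fin t) × (Fin s × Fin t))

def widx {s t D : ℕ} (w : WT s t D) : Fin s × Fin t :=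
  if w.1.2 then (w.2.2 w.1.1).1 else (w.2.2 w.1.1).2

abbrev PatT (n s t D : ℕ) :=
  Bool × ((Fin s → Fin n) × (Fin t → Fin n)) × (Fin D → (Fin s × Fin t) × (Fin s × Fin t))

def pcell {n s t : ℕ} (o : Bool) (fs : Fin s → Fin n) (ft : Fin t → Fin n)
    (ij : Fin s × Fin t) : Cell n :=
  if o then (ft ij.2, fs ij.1) else (fs ij.1, ft ij.2)

def psrc {n s t D : ℕ} (p : PatT n s t D) (r : Fin D) : Cell n :=
  pcell p.1 p.2.1.1 p.2.1.2 (p.2.2 r).1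

def ptgt {n s t D : ℕ} (p : PatT n s t D) (r : Fin D) : Cell n :=
  pcell p.1 p.2.1.1 p.2.1.2 (p.2.2 r).2

def cellAt {n s t D : ℕ} (p : PatT n s t D) (rs : Fin D × Bool) : Cell n :=
  if rs.2 then psrc p rs.1 else ptgt p rs.1

lemma cellAt_widx {n s t D : ℕ} (p : PatT n s t D) (rs : Fin D × Bool) :
    cellAt p rs = pcell p.1 p.2.1.1 p.2.1.2 (widx (rs, p.1, p.2.2)) := by
  rcases rs with ⟨r, side⟩
  cases side <;> simp [cellAt, widx, psrc, ptgt]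

def pvalid {n s t D : ℕ} (p : PatT n s t D) : Prop :=
  Function.Injective (psrc p) ∧ ∀ r, cellOrd (ptgt p r) < cellOrd (psrc p r)

instance {n s t D : ℕ} : DecidablePred (pvalid (n := n) (s := s) (t := t) (D := D)) := by
  intro p
  unfold pvalid
  infer_instance

def vbl {n s t D : ℕ} (p : PatT n s t D) : Finset (Cell n) :=
  Finset.univ.image (psrc p) ∪ Finset.univ.image (ptgt p)

lemma mem_vbl_iff {n s t D : ℕ} (p : PatT n s t D) (v : Cell n) :
    v ∈ vbl p ↔ ∃ rs : Fin D × Bool, cellAt p rs = v := by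
  constructor
  · intro h
    rcases Finset.mem_union.mp h with h | h
    · obtain ⟨r, -, hr⟩ := Finset.mem_image.mp h
      exact ⟨(r, true), hr⟩
    · obtain ⟨r, -, hr⟩ := Finset.mem_image.mp h
      exact ⟨(r, false), hr⟩
  · rintro ⟨⟨r, side⟩, hr⟩
    cases side
    · exact Finset.mem_union_right _ (Finset.mem_image.mpr ⟨r, Finset.mem_univ _, hr⟩)
    · exact Finset.mem_union_left _ (Finset.mem_image.mpr ⟨r, Finset.mem_univ _, hr⟩)

lemma card_vbl_le {n s t D : ℕ} (p : PatT n s t D) : (vbl p).card ≤ 2*D := by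
  refine le_trans (Finset.card_union_le _ _) ?_
  have h1 := Finset.card_image_le (s := (Finset.univ : Finset (Fin D))) (f := psrc p)
  have h2 := Finset.card_image_le (s := (Finset.univ : Finset (Fin D))) (f := ptgt p)
  simp only [Finset.card_univ, Fintype.card_fin] at h1 h2
  omega

lemma fs_ft_of_cellAt {n s t D : ℕ} {p : PatT n s t D} {rs : Fin D × Bool} {v : Cell n}
    (h : cellAt p rs = v) :
    p.2.1.1 (widx (rs, p.1, p.2.2)).1 = (if p.1 then v.2 else v.1)
      ∧ p.2.1.2 (widx (rs, p.1, p.2.2)).2 = (if p.1 then v.1 else v.2) := by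
  rw [cellAt_widx] at h
  cases hp1 : p.1 with
  | false =>
    rw [hp1] at h
    simp only [pcell, if_false, Bool.false_eq_true] at h
    rw [Prod.ext_iff] at h
    simp only [if_neg (by simp : ¬(false = true))]
    exact ⟨h.1, h.2⟩
  | true =>
    rw [hp1] at h
    simp only [pcell, if_true] at h
    rw [Prod.ext_iff] at h
    simp only [if_pos rfl]
    exact ⟨h.2, h.1⟩

end EG
namespace EG

lemma card_restricted_fun (n s : ℕ) (i : Fin s) :
    Fintype.card ({x : Fin s // x ≠ i} → Fin n) = n^(s-1) := by
  rw [Fintype.card_fun, Fintype.card_fin]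
  congr 1
  have : Fintype.card {x : Fin s // x ≠ i} = Fintype.card (Fin s) - 1 := by
    have := Fintype.card_subtype_compl (p := fun x : Fin s => x = i)
    simp only [Fintype.card_subtype_eq] at this
    convert this using 2
  rw [this, Fintype.card_fin]

lemma percell {n s t D : ℕ} (hD : 0 < D) (v : Cell n) :
    (Finset.univ.filter fun p : {p : PatT n s t D // pvalid p} => v ∈ vbl p.val).card
      ≤ Fintype.card (WT s t D) * (n^(s-1) * n^(t-1)) := by
  classical
  set F : {p : PatT n s t D // pvalid p} → WT s t D := fun p =>
    if h : ∃ rs : Fin D × Bool, cellAt p.val rs = v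
    then (h.choose, p.val.1, p.val.2.2)
    else ((⟨0, hD⟩, true), p.val.1, p.val.2.2) with hF
  rw [Finset.card_eq_sum_card_fiberwise (f := F) (t := Finset.univ) (fun x _ => Finset.mem_univ _)]
  have hfiber : ∀ w ∈ (Finset.univ : Finset (WT s t D)),
      (((Finset.univ.filter fun p : {p : PatT n s t D // pvalid p} => v ∈ vbl p.val)).filter
        fun p => F p = w).card ≤ n^(s-1) * n^(t-1) := by
    intro w _
    have hcard : Fintype.card (({x : Fin s // x ≠ (widx w).1} → Fin n)
        × ({y : Fin t // y ≠ (widx w).2} → Fin n)) = n^(s-1) * n^(t-1) := by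
      rw [Fintype.card_prod, card_restricted_fun, card_restricted_fun]
    refine le_trans (Finset.card_le_card_of_injOn
      (f := fun p : {p : PatT n s t D // pvalid p} =>
        (((fun x : {x : Fin s // x ≠ (widx w).1} => p.val.2.1.1 x.val) :
            {x : Fin s // x ≠ (widx w).1} → Fin n),
         ((fun y : {y : Fin t // y ≠ (widx w).2} => p.val.2.1.2 y.val) :
            {y : Fin t // y ≠ (widx w).2} → Fin n)))
      (t := Finset.univ) (fun a _ => Finset.mem_univ _) ?_)
      (by rw [Finset.card_univ, hcard])
    intro p₁ hp₁ p₂ hp₂ heq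
    simp only [Finset.coe_filter, Set.mem_setOf_eq, Finset.mem_filter, Finset.mem_univ,
      true_and] at hp₁ hp₂
    obtain ⟨hv₁, hw₁⟩ := hp₁
    obtain ⟨hv₂, hw₂⟩ := hp₂
    have hne₁ : ∃ rs : Fin D × Bool, cellAt p₁.val rs = v := (mem_vbl_iff _ _).mp hv₁
    have hne₂ : ∃ rs : Fin D × Bool, cellAt p₂.val rs = v := (mem_vbl_iff _ _).mp hv₂
    rw [hF] at hw₁ hw₂
    simp only [dif_pos hne₁] at hw₁
    simp only [dif_pos hne₂] at hw₂
    -- w components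
    set rs₁ := hne₁.choose with hrs₁def
    set rs₂ := hne₂.choose with hrs₂def
    have hc₁ : cellAt p₁.val rs₁ = v := hne₁.choose_spec
    have hc₂ : cellAt p₂.val rs₂ = v := hne₂.choose_spec
    have hcomp : rs₁ = rs₂ ∧ p₁.val.1 = p₂.val.1 ∧ p₁.val.2.2 = p₂.val.2.2 := by
      rw [← hw₂] at hw₁
      simp only [Prod.mk.injEq] at hw₁
      exact ⟨hw₁.1, hw₁.2.1, hw₁.2.2⟩
    obtain ⟨hrs, ho, hsk⟩ := hcomp
    -- the special indices
    have hwidx₁ : widx (rs₁, p₁.val.1, p₁.val.2.2) = widx w := by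
      rw [← hw₁]
    have hwidx₂ : widx (rs₂, p₂.val.1, p₂.val.2.2) = widx w := by
      rw [← hw₂]
    have hfsft₁ := fs_ft_of_cellAt hc₁
    have hfsft₂ := fs_ft_of_cellAt hc₂
    rw [hwidx₁] at hfsft₁
    rw [hwidx₂] at hfsft₂
    -- function equality from heq
    have heqf : ∀ x : {x : Fin s // x ≠ (widx w).1}, p₁.val.2.1.1 x.val = p₂.val.2.1.1 x.val := by
      intro x
      exact congrFun (congrArg Prod.fst heq) x
    have heqg : ∀ y : {y : Fin t // y ≠ (widx w).2}, p₁.val.2.1.2 y.val = p₂.val.2.1.2 y.val := by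
      intro y
      exact congrFun (congrArg Prod.snd heq) y
    have hfs : p₁.val.2.1.1 = p₂.val.2.1.1 := by
      funext x
      by_cases hx : x = (widx w).1
      · subst hx
        rw [hfsft₁.1, hfsft₂.1, ho]
      · exact heqf ⟨x, hx⟩
    have hft : p₁.val.2.1.2 = p₂.val.2.1.2 := by
      funext y
      by_cases hy : y = (widx w).2
      · subst hy
        rw [hfsft₁.2, hfsft₂.2, ho]
      · exact heqg ⟨y, hy⟩
    apply Subtype.ext
    have h21 : p₁.val.2.1 = p₂.val.2.1 := Prod.ext hfs hft
    have h2 : p₁.val.2 = p₂.val.2 := Prod.ext h21 hsk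
    exact Prod.ext ho h2
  refine le_trans (Finset.sum_le_card_nsmul _ _ _ hfiber) ?_
  rw [Finset.card_univ, smul_eq_mul]

lemma degree_bound {n s t D : ℕ} (hD : 0 < D) (p₀ : {p : PatT n s t D // pvalid p}) :
    (Finset.univ.filter fun p : {p : PatT n s t D // pvalid p} =>
      ¬ Disjoint (vbl p₀.val) (vbl p.val)).card
      ≤ 2*D*(Fintype.card (WT s t D) * (n^(s-1) * n^(t-1))) := by
  classical
  have hsub : (Finset.univ.filter fun p : {p : PatT n s t D // pvalid p} =>
      ¬ Disjoint (vbl p₀.val) (vbl p.val))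
      ⊆ (vbl p₀.val).biUnion (fun v => Finset.univ.filter
          fun p : {p : PatT n s t D // pvalid p} => v ∈ vbl p.val) := by
    intro p hp
    rw [Finset.mem_filter] at hp
    obtain ⟨v, hv₀, hv⟩ := Finset.not_disjoint_iff.mp hp.2
    exact Finset.mem_biUnion.mpr ⟨v, hv₀, Finset.mem_filter.mpr ⟨Finset.mem_univ _, hv⟩⟩
  refine le_trans (Finset.card_le_card hsub) ?_
  refine le_trans (Finset.card_biUnion_le) ?_
  refine le_trans (Finset.sum_le_card_nsmul _ _ (Fintype.card (WT s t D) * (n^(s-1) * n^(t-1)))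
    (fun v _ => percell hD v)) ?_
  rw [smul_eq_mul]
  have := card_vbl_le p₀.val
  exact Nat.mul_le_mul_right _ this

end EG
namespace EG

lemma pattern_exists {n s t D k : ℕ} (ω : Cell n → Fin k) (S : Finset (Cell n))
    (hS : S.card = s*t) (o : Bool) (fs : Fin s → Fin n) (ft : Fin t → Fin n)
    (hcell : ∀ z ∈ S, ∃ ij : Fin s × Fin t, pcell o fs ft ij = z)
    (himg : (S.image ω).card ≤ s*t - D) (hD : 0 < D) (hDst : D ≤ s*t) :
    ∃ p : PatT n s t D, pvalid p ∧ (∀ r, ω (psrc p r) = ω (ptgt p r)) := by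
  classical
  set X := S.filter (fun x => ∃ y ∈ S, cellOrd y < cellOrd x ∧ ω y = ω x) with hX
  have hXsub : X ⊆ S := Finset.filter_subset _ _
  -- S \ X is rainbow
  have hinj : Set.InjOn ω ((S \ X : Finset (Cell n)) : Set (Cell n)) := by
    intro x₁ h₁ x₂ h₂ hω
    rw [Finset.mem_coe, Finset.mem_sdiff] at h₁ h₂
    by_contra hne
    rcases lt_trichotomy (cellOrd x₁) (cellOrd x₂) with hlt | heq | hlt
    · exact h₂.2 (Finset.mem_filter.mpr ⟨h₂.1, ⟨x₁, h₁.1, hlt, hω⟩⟩)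
    · exact hne (cellOrd_inj heq)
    · exact h₁.2 (Finset.mem_filter.mpr ⟨h₁.1, ⟨x₂, h₂.1, hlt, hω.symm⟩⟩)
  have hcard1 : (S \ X).card ≤ (S.image ω).card := by
    rw [← Finset.card_image_of_injOn hinj]
    apply Finset.card_le_card
    apply Finset.image_subset_image
    exact Finset.sdiff_subset
  have hXD : D ≤ X.card := by
    have := Finset.card_sdiff_of_subset hXsub
    omega
  obtain ⟨X', hX'sub, hX'card⟩ := Finset.exists_subset_card_eq hXD
  have hcast : D = X'.card := hX'card.symm
  set srcCell : Fin D → Cell n := fun r => (X'.equivFin.symm (Fin.cast hcast r)).val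
    with hsrcCell
  have hsrcmem : ∀ r, srcCell r ∈ X' := fun r => (X'.equivFin.symm (Fin.cast hcast r)).prop
  have hsrcinj : Function.Injective srcCell := by
    intro r₁ r₂ h
    have := Subtype.ext h
    have h2 := X'.equivFin.symm.injective this
    have h3 := congrArg Fin.val h2
    exact Fin.val_injective h3
  have hprop : ∀ r : Fin D, ∃ y ∈ S, cellOrd y < cellOrd (srcCell r) ∧ ω y = ω (srcCell r) := by
    intro r
    have := hX'sub (hsrcmem r)
    rw [hX, Finset.mem_filter] at this
    exact this.2
  set tgtCell : Fin D → Cell n := fun r => ((hprop r).choose) with htgtCell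
  have htgtspec : ∀ r, tgtCell r ∈ S ∧ cellOrd (tgtCell r) < cellOrd (srcCell r)
      ∧ ω (tgtCell r) = ω (srcCell r) := by
    intro r
    obtain ⟨h1, h2, h3⟩ := (hprop r).choose_spec
    exact ⟨h1, h2, h3⟩
  have hsrcS : ∀ r, srcCell r ∈ S := fun r => hXsub (hX'sub (hsrcmem r))
  set ijS : Fin D → Fin s × Fin t := fun r => (hcell (srcCell r) (hsrcS r)).choose with hijS
  have hijSspec : ∀ r, pcell o fs ft (ijS r) = srcCell r :=
    fun r => (hcell (srcCell r) (hsrcS r)).choose_spec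
  set ijT : Fin D → Fin s × Fin t := fun r => (hcell (tgtCell r) (htgtspec r).1).choose with hijT
  have hijTspec : ∀ r, pcell o fs ft (ijT r) = tgtCell r :=
    fun r => (hcell (tgtCell r) (htgtspec r).1).choose_spec
  refine ⟨(o, (fs, ft), fun r => (ijS r, ijT r)), ⟨?_, ?_⟩, ?_⟩
  · intro r₁ r₂ h
    apply hsrcinj
    rw [← hijSspec r₁, ← hijSspec r₂]
    exact h
  · intro r
    show cellOrd (pcell o fs ft (ijT r)) < cellOrd (pcell o fs ft (ijS r))
    rw [hijSspec r, hijTspec r]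
    exact (htgtspec r).2.1
  · intro r
    show ω (pcell o fs ft (ijS r)) = ω (pcell o fs ft (ijT r))
    rw [hijSspec r, hijTspec r]
    exact (htgtspec r).2.2.symm

lemma good_coloring (n s t D k : ℕ) (hD : 0 < D) (hDst : D ≤ s*t) (hk : 0 < k)
    (hbig : 4*(2*D*(Fintype.card (WT s t D) * (n^(s-1) * n^(t-1))) + 1) ≤ k^D) :
    ∃ c : Fin n → Fin n → ℕ, (∀ a b, c a b < k) ∧
      ∀ A B : Finset (Fin n), (A.card = s ∧ B.card = t) ∨ (A.card = t ∧ B.card = s) →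
        s*t - D < ((A ×ˢ B).image fun p => c p.1 p.2).card := by
  classical
  set d := 2*D*(Fintype.card (WT s t D) * (n^(s-1) * n^(t-1))) + 1 with hd
  -- count of each pattern event
  have hcnt : ∀ p : {p : PatT n s t D // pvalid p},
      (Finset.univ.filter fun ω : Cell n → Fin k => ∀ r, ω (psrc p.val r) = ω (ptgt p.val r)).card
        * k^D = Fintype.card (Cell n → Fin k) := by
    intro p
    have := count_constraints (K := Fin k) (f := cellOrd) cellOrd_inj
      (src := psrc p.val) (tgt := ptgt p.val) p.prop.1 p.prop.2 Finset.univ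
    rw [Finset.card_univ, Fintype.card_fin, Fintype.card_fin] at this
    convert this using 3
    · apply Finset.filter_congr
      intro ω _
      simp
  have hdep : ∀ p : {p : PatT n s t D // pvalid p},
      DepOn (fun ω : Cell n → Fin k => ∀ r, ω (psrc p.val r) = ω (ptgt p.val r)) (vbl p.val) := by
    intro p ω ω' hag
    have h1 : ∀ r, ω (psrc p.val r) = ω' (psrc p.val r) := by
      intro r
      apply hag
      exact Finset.mem_union_left _ (Finset.mem_image.mpr ⟨r, Finset.mem_univ _, rfl⟩)
    have h2 : ∀ r, ω (ptgt p.val r) = ω' (ptgt p.val r) := by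
      intro r
      apply hag
      exact Finset.mem_union_right _ (Finset.mem_image.mpr ⟨r, Finset.mem_univ _, rfl⟩)
    constructor
    · intro h r; rw [← h1 r, ← h2 r]; exact h r
    · intro h r; rw [h1 r, h2 r]; exact h r
  have hLLL := LLL (V := Cell n) (K := Fin k) (I := {p : PatT n s t D // pvalid p})
    (vbl := fun p => vbl p.val)
    (Pr := fun p (ω : Cell n → Fin k) => ∀ r, ω (psrc p.val r) = ω (ptgt p.val r))
    hdep d (by omega)
    (fun p => le_trans (degree_bound hD p) (by omega))
    ⟨⟨0, hk⟩⟩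
    (by
      intro p
      calc 4*d*(Finset.univ.filter fun ω : Cell n → Fin k =>
            ∀ r, ω (psrc p.val r) = ω (ptgt p.val r)).card
          ≤ k^D*(Finset.univ.filter fun ω : Cell n → Fin k =>
            ∀ r, ω (psrc p.val r) = ω (ptgt p.val r)).card := by
            apply Nat.mul_le_mul_right
            exact hbig
        _ = Fintype.card (Cell n → Fin k) := by rw [Nat.mul_comm]; exact hcnt p)
  obtain ⟨ω, hω⟩ := hLLL
  refine ⟨fun a b => (ω (a, b)).val, fun a b => (ω (a, b)).isLt, ?_⟩
  intro A B hAB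
  by_contra hcon
  push_neg at hcon
  -- image cards
  have himgeq : ((A ×ˢ B).image fun p => (ω (p.1, p.2)).val).card
      = ((A ×ˢ B).image ω).card := by
    have h1 : ((A ×ˢ B).image fun p : Fin n × Fin n => (ω (p.1, p.2)).val)
        = ((A ×ˢ B).image ω).image Fin.val := by
      rw [Finset.image_image]
      rfl
    rw [h1]
    exact Finset.card_image_of_injective _ Fin.val_injective
  rw [himgeq] at hcon
  have hbad : ∃ p : PatT n s t D, pvalid p ∧ (∀ r, ω (psrc p r) = ω (ptgt p r)) := by
    rcases hAB with ⟨hA, hB⟩ | ⟨hA, hB⟩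
    · have hcastA : s = A.card := hA.symm
      have hcastB : t = B.card := hB.symm
      set fs : Fin s → Fin n := fun i => (A.equivFin.symm (Fin.cast hcastA i)).val
      set ft : Fin t → Fin n := fun j => (B.equivFin.symm (Fin.cast hcastB j)).val
      refine pattern_exists ω (A ×ˢ B) (by rw [Finset.card_product, hA, hB]) false fs ft
        ?_ hcon hD hDst
      intro z hz
      rw [Finset.mem_product] at hz
      refine ⟨(Fin.cast hcastA.symm (A.equivFin ⟨z.1, hz.1⟩),
        Fin.cast hcastB.symm (B.equivFin ⟨z.2, hz.2⟩)), ?_⟩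
      show ((A.equivFin.symm (Fin.cast hcastA (Fin.cast hcastA.symm (A.equivFin ⟨z.1, hz.1⟩)))).val,
        (B.equivFin.symm (Fin.cast hcastB (Fin.cast hcastB.symm (B.equivFin ⟨z.2, hz.2⟩)))).val) = z
      have e1 : Fin.cast hcastA (Fin.cast hcastA.symm (A.equivFin ⟨z.1, hz.1⟩))
          = A.equivFin ⟨z.1, hz.1⟩ := by
        apply Fin.ext
        simp
      have e2 : Fin.cast hcastB (Fin.cast hcastB.symm (B.equivFin ⟨z.2, hz.2⟩))
          = B.equivFin ⟨z.2, hz.2⟩ := by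
        apply Fin.ext
        simp
      rw [e1, e2]
      simp
    · have hcastA : t = A.card := hA.symm
      have hcastB : s = B.card := hB.symm
      set fs : Fin s → Fin n := fun i => (B.equivFin.symm (Fin.cast hcastB i)).val
      set ft : Fin t → Fin n := fun j => (A.equivFin.symm (Fin.cast hcastA j)).val
      refine pattern_exists ω (A ×ˢ B) (by rw [Finset.card_product, hA, hB, Nat.mul_comm]) true fs ft
        ?_ hcon hD hDst
      intro z hz
      rw [Finset.mem_product] at hz
      refine ⟨(Fin.cast hcastB.symm (B.equivFin ⟨z.2, hz.2⟩),
        Fin.cast hcastA.symm (A.equivFin ⟨z.1, hz.1⟩)), ?_⟩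
      show ((A.equivFin.symm (Fin.cast hcastA (Fin.cast hcastA.symm (A.equivFin ⟨z.1, hz.1⟩)))).val,
        (B.equivFin.symm (Fin.cast hcastB (Fin.cast hcastB.symm (B.equivFin ⟨z.2, hz.2⟩)))).val) = z
      have e1 : Fin.cast hcastA (Fin.cast hcastA.symm (A.equivFin ⟨z.1, hz.1⟩))
          = A.equivFin ⟨z.1, hz.1⟩ := by
        apply Fin.ext
        simp
      have e2 : Fin.cast hcastB (Fin.cast hcastB.symm (B.equivFin ⟨z.2, hz.2⟩))
          = B.equivFin ⟨z.2, hz.2⟩ := by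
        apply Fin.ext
        simp
      rw [e1, e2]
      simp
  obtain ⟨p, hvalid, hev⟩ := hbad
  exact hω ⟨p, hvalid⟩ hev

end EG
namespace EG

set_option maxHeartbeats 1600000 in
lemma lower_bound (n s t : ℕ) (hs : 2 ≤ s) (hst : s ≤ t) (k : ℕ)
    (c : Fin n → Fin n → ℕ) (hck : ∀ a b, c a b < k)
    (hgood : ∀ A B : Finset (Fin n), (A.card = s ∧ B.card = t) ∨ (A.card = t ∧ B.card = s) →
      (s*t - s - t + 3) ≤ ((A ×ˢ B).image fun p => c p.1 p.2).card) :
    n ≤ 8*s*t*k := by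
  classical
  by_contra hcon
  push_neg at hcon
  have hn : 0 < n := by omega
  have hk : 0 < k := by
    have := hck ⟨0, hn⟩ ⟨0, hn⟩
    omega
  set cls : Fin n → ℕ → Finset (Fin n) := fun a v => Finset.univ.filter (fun b => c a b = v)
    with hcls
  -- key pair lemma
  have hkey : ∀ b b' : Fin n, b ≠ b' →
      (Finset.univ.filter fun a => c a b = c a b' ∧ t ≤ (cls a (c a b)).card).card ≤ s - 1 := by
    intro b b' hbb
    by_contra hge
    push_neg at hge
    have hR : s ≤ (Finset.univ.filter fun a => c a b = c a b' ∧ t ≤ (cls a (c a b)).card).card := by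
      omega
    set R := Finset.univ.filter fun a => c a b = c a b' ∧ t ≤ (cls a (c a b)).card with hRdef
    obtain ⟨a₀, ha₀⟩ := Finset.card_pos.mp (by omega : 0 < R.card)
    rw [hRdef, Finset.mem_filter] at ha₀
    obtain ⟨-, hmono, hheavy⟩ := ha₀
    set M := Finset.univ.filter fun a => c a b = c a b' with hMdef
    have hRM : R ⊆ M := by
      intro a ha
      rw [hRdef, Finset.mem_filter] at ha
      exact Finset.mem_filter.mpr ⟨Finset.mem_univ _, ha.2.1⟩
    have hMcard : s ≤ M.card := le_trans hR (Finset.card_le_card hRM)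
    have ha₀M : a₀ ∈ M := Finset.mem_filter.mpr ⟨Finset.mem_univ _, hmono⟩
    have herase : s - 1 ≤ (M.erase a₀).card := by
      rw [Finset.card_erase_of_mem ha₀M]
      omega
    obtain ⟨A', hA'sub, hA'card⟩ := Finset.exists_subset_card_eq herase
    have ha₀A' : a₀ ∉ A' := fun h => Finset.notMem_erase a₀ M (hA'sub h)
    set A := insert a₀ A' with hAdef
    have hAcard : A.card = s := by
      rw [hAdef, Finset.card_insert_of_notMem ha₀A', hA'card]
      omega
    -- construct B
    have hbb2 : ({b, b'} : Finset (Fin n)).card = 2 := Finset.card_pair hbb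
    have hsubcls : ({b, b'} : Finset (Fin n)) ⊆ cls a₀ (c a₀ b) := by
      intro x hx
      rcases Finset.mem_insert.mp hx with rfl | hx
      · exact Finset.mem_filter.mpr ⟨Finset.mem_univ _, rfl⟩
      · rw [Finset.mem_singleton] at hx
        subst hx
        exact Finset.mem_filter.mpr ⟨Finset.mem_univ _, hmono.symm⟩
    have hit : (t - 2) + ({b, b'} : Finset (Fin n)).card ≤ (cls a₀ (c a₀ b)).card := by
      rw [hbb2]
      omega
    obtain ⟨B, hBsub0, hBsub, hBcard⟩ := Finset.exists_subsuperset_card_eq hsubcls (Nat.le_add_left _ _) hit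
    rw [hbb2] at hBcard
    have hBcard' : B.card = t := by omega
    have hbB : b ∈ B := hBsub0 (Finset.mem_insert_self _ _)
    have hb'B : b' ∈ B := hBsub0 (by simp)
    -- apply validity
    have hq := hgood A B (Or.inl ⟨hAcard, hBcard'⟩)
    -- image bound
    have himgsub : ((A ×ˢ B).image fun p => c p.1 p.2) ⊆ A.biUnion (fun a => B.image (c a)) := by
      intro x hx
      obtain ⟨p, hp, rfl⟩ := Finset.mem_image.mp hx
      rw [Finset.mem_product] at hp
      exact Finset.mem_biUnion.mpr ⟨p.1, hp.1, Finset.mem_image.mpr ⟨p.2, hp.2, rfl⟩⟩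
    have himg1 : (B.image (c a₀)).card ≤ 1 := by
      have : B.image (c a₀) ⊆ {c a₀ b} := by
        intro y hy
        obtain ⟨x, hx, rfl⟩ := Finset.mem_image.mp hy
        have := hBsub hx
        rw [hcls, Finset.mem_filter] at this
        rw [Finset.mem_singleton, this.2]
      exact le_trans (Finset.card_le_card this) (by simp)
    have himg2 : ∀ a ∈ A', (B.image (c a)).card ≤ t - 1 := by
      intro a ha
      have haM : a ∈ M := Finset.mem_of_mem_erase (hA'sub ha)
      rw [hMdef, Finset.mem_filter] at haM
      have heqim : B.image (c a) = (B.erase b').image (c a) := by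
        apply Finset.Subset.antisymm
        · intro y hy
          obtain ⟨x, hx, rfl⟩ := Finset.mem_image.mp hy
          by_cases hxb : x = b'
          · subst hxb
            refine Finset.mem_image.mpr ⟨b, Finset.mem_erase.mpr ⟨hbb, hbB⟩, ?_⟩
            exact haM.2 ▸ rfl
          · exact Finset.mem_image.mpr ⟨x, Finset.mem_erase.mpr ⟨hxb, hx⟩, rfl⟩
        · exact Finset.image_subset_image (Finset.erase_subset _ _)
      rw [heqim]
      refine le_trans (Finset.card_image_le) ?_
      rw [Finset.card_erase_of_mem hb'B, hBcard']
    have himgcard : ((A ×ˢ B).image fun p => c p.1 p.2).card ≤ 1 + (s-1)*(t-1) := by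
      refine le_trans (Finset.card_le_card himgsub) ?_
      refine le_trans (Finset.card_biUnion_le) ?_
      rw [hAdef, Finset.sum_insert ha₀A']
      have : ∑ a ∈ A', (B.image (c a)).card ≤ (s-1)*(t-1) := by
        refine le_trans (Finset.sum_le_card_nsmul _ _ (t-1) (fun a ha => himg2 a ha)) ?_
        rw [hA'card, smul_eq_mul]
      omega
    -- contradiction with q
    obtain ⟨a, rfl⟩ : ∃ a, s = a + 2 := ⟨s - 2, by omega⟩
    obtain ⟨b2, rfl⟩ : ∃ b2, t = b2 + 2 := ⟨t - 2, by omega⟩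
    set Q := a*b2 with hQ
    have hexp1 : (a+2)*(b2+2) = Q + 2*a + 2*b2 + 4 := by rw [hQ]; ring
    have hexp2 : (a+2-1)*(b2+2-1) = Q + a + b2 + 1 := by
      have h1 : a+2-1 = a+1 := by omega
      have h2 : b2+2-1 = b2+1 := by omega
      rw [h1, h2, hQ]; ring
    rw [hexp1] at hq
    rw [hexp2] at himgcard
    omega
  -- per-row and global counting
  set mfn : Fin n → ℕ → ℕ := fun a v => (cls a v).card with hmfn
  set BigV : Fin n → Finset ℕ := fun a => (Finset.range k).filter (fun v => t ≤ mfn a v)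
    with hBigV
  set N : Fin n → ℕ := fun a => ∑ v ∈ BigV a, mfn a v with hN
  set SQ : Fin n → ℕ := fun a => ∑ v ∈ BigV a, (mfn a v)^2 with hSQ
  set PS : Fin n → Finset (Fin n × Fin n) := fun a => (Finset.univ ×ˢ Finset.univ).filter
    (fun p => p.1 ≠ p.2 ∧ c a p.1 = c a p.2 ∧ t ≤ (cls a (c a p.1)).card) with hPS
  -- F1 : SQ a ≤ PS a + N a
  have F1 : ∀ a, SQ a ≤ (PS a).card + N a := by
    intro a
    have hU : ((BigV a).biUnion (fun v => (cls a v).offDiag)) ⊆ PS a := by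
      intro z hz
      obtain ⟨v, hv, hzv⟩ := Finset.mem_biUnion.mp hz
      rw [Finset.mem_offDiag] at hzv
      obtain ⟨hz1, hz2, hz12⟩ := hzv
      rw [hcls, Finset.mem_filter] at hz1 hz2
      rw [hBigV, Finset.mem_filter] at hv
      refine Finset.mem_filter.mpr ⟨Finset.mem_product.mpr ⟨Finset.mem_univ _, Finset.mem_univ _⟩,
        hz12, ?_, ?_⟩
      · rw [hz1.2, hz2.2]
      · rw [hz1.2]
        exact hv.2
    have hdisj : ∀ v1 ∈ BigV a, ∀ v2 ∈ BigV a, v1 ≠ v2 →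
        Disjoint ((cls a v1).offDiag) ((cls a v2).offDiag) := by
      intro v1 _ v2 _ hv12
      rw [Finset.disjoint_left]
      intro z hz1 hz2
      rw [Finset.mem_offDiag] at hz1 hz2
      have e1 := hz1.1
      have e2 := hz2.1
      rw [hcls, Finset.mem_filter] at e1 e2
      exact hv12 (e1.2.symm.trans e2.2)
    have hcardU := Finset.card_biUnion hdisj
    have hsum : ∑ v ∈ BigV a, ((cls a v).offDiag).card = ∑ v ∈ BigV a, (mfn a v * mfn a v - mfn a v) := by
      apply Finset.sum_congr rfl
      intro v _
      rw [Finset.offDiag_card]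
    have hle : ∑ v ∈ BigV a, (mfn a v * mfn a v - mfn a v) ≤ (PS a).card := by
      rw [← hsum, ← hcardU]
      exact Finset.card_le_card hU
    have hterm : ∀ v ∈ BigV a, (mfn a v)^2 ≤ (mfn a v * mfn a v - mfn a v) + mfn a v := by
      intro v _
      have : mfn a v ≤ mfn a v * mfn a v := Nat.le_mul_of_pos_left _ (by
        by_cases h : mfn a v = 0
        · rw [hBigV, Finset.mem_filter] at *
          omega
        · omega)
      rw [pow_two]
      omega
    calc SQ a ≤ ∑ v ∈ BigV a, ((mfn a v * mfn a v - mfn a v) + mfn a v) := by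
          rw [hSQ]
          exact Finset.sum_le_sum hterm
      _ = (∑ v ∈ BigV a, (mfn a v * mfn a v - mfn a v)) + N a := by
          rw [hN, Finset.sum_add_distrib]
      _ ≤ (PS a).card + N a := by omega
  -- F2 : N a ^ 2 ≤ k * SQ a
  have F2 : ∀ a, (N a)*(N a) ≤ k * SQ a := by
    intro a
    have hcs := Finset.sum_mul_sq_le_sq_mul_sq (BigV a) (fun v => mfn a v) (fun _ => 1)
    simp only [mul_one, one_pow] at hcs
    have hsum1 : ∑ _v ∈ BigV a, (1:ℕ) = (BigV a).card := by simp
    rw [hsum1] at hcs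
    have hcard : (BigV a).card ≤ k := by
      refine le_trans (Finset.card_filter_le _ _) ?_
      rw [Finset.card_range]
    calc (N a)*(N a) = (∑ v ∈ BigV a, mfn a v)^2 := by rw [hN, pow_two]
      _ ≤ (∑ v ∈ BigV a, (mfn a v)^2) * (BigV a).card := hcs
      _ ≤ SQ a * k := by
          apply Nat.mul_le_mul_left
          exact hcard
      _ = k * SQ a := Nat.mul_comm _ _
  -- F3 : n ≤ N a + k*(t-1)
  have F3 : ∀ a, n ≤ N a + k*(t-1) := by
    intro a
    have hfib : (Finset.univ : Finset (Fin n)).card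
        = ∑ v ∈ Finset.range k, (Finset.univ.filter (fun b => c a b = v)).card := by
      apply Finset.card_eq_sum_card_fiberwise
      intro b _
      exact Finset.mem_range.mpr (hck a b)
    have hn2 : ∑ v ∈ Finset.range k, mfn a v = n := by
      rw [hmfn]
      simp only [hcls]
      rw [← hfib, Finset.card_univ, Fintype.card_fin]
    have hsmall : ∑ v ∈ (Finset.range k).filter (fun v => ¬ t ≤ mfn a v), mfn a v ≤ k*(t-1) := by
      refine le_trans (Finset.sum_le_card_nsmul _ _ (t-1) ?_) ?_
      · intro v hv
        rw [Finset.mem_filter] at hv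
        omega
      · rw [smul_eq_mul]
        apply Nat.mul_le_mul_right
        refine le_trans (Finset.card_filter_le _ _) ?_
        rw [Finset.card_range]
    have hNa : N a = ∑ v ∈ (Finset.range k).filter (fun v => t ≤ mfn a v), mfn a v := rfl
    have hsplit : ∑ v ∈ (Finset.range k).filter (fun v => t ≤ mfn a v), mfn a v
        + ∑ v ∈ (Finset.range k).filter (fun v => ¬ t ≤ mfn a v), mfn a v
        = ∑ v ∈ Finset.range k, mfn a v := Finset.sum_filter_add_sum_filter_not _ _ _
    omega
  -- F6 : N a ≤ n
  have F6 : ∀ a, N a ≤ n := by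
    intro a
    have hfib : (Finset.univ : Finset (Fin n)).card
        = ∑ v ∈ Finset.range k, (Finset.univ.filter (fun b => c a b = v)).card := by
      apply Finset.card_eq_sum_card_fiberwise
      intro b _
      exact Finset.mem_range.mpr (hck a b)
    have hn2 : ∑ v ∈ Finset.range k, mfn a v = n := by
      rw [hmfn]
      simp only [hcls]
      rw [← hfib, Finset.card_univ, Fintype.card_fin]
    calc N a = ∑ v ∈ BigV a, mfn a v := rfl
      _ ≤ ∑ v ∈ Finset.range k, mfn a v :=
          Finset.sum_le_sum_of_subset (Finset.filter_subset _ _)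
      _ = n := hn2
  -- F4 : global bound
  have F4 : ∑ a, (PS a).card ≤ (s-1)*(n*n) := by
    have hswap : ∑ a, (PS a).card = ∑ p ∈ (Finset.univ ×ˢ Finset.univ : Finset (Fin n × Fin n)),
        (Finset.univ.filter (fun a : Fin n =>
          p.1 ≠ p.2 ∧ c a p.1 = c a p.2 ∧ t ≤ (cls a (c a p.1)).card)).card := by
      have h1 : ∀ a, (PS a).card = ∑ p ∈ (Finset.univ ×ˢ Finset.univ : Finset (Fin n × Fin n)),
          (if p.1 ≠ p.2 ∧ c a p.1 = c a p.2 ∧ t ≤ (cls a (c a p.1)).card then 1 else 0) := by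
        intro a
        rw [hPS]
        exact Finset.card_filter _ _
      have h2 : ∀ p : Fin n × Fin n, (Finset.univ.filter (fun a : Fin n =>
          p.1 ≠ p.2 ∧ c a p.1 = c a p.2 ∧ t ≤ (cls a (c a p.1)).card)).card
          = ∑ a, (if p.1 ≠ p.2 ∧ c a p.1 = c a p.2 ∧ t ≤ (cls a (c a p.1)).card then 1 else 0) := by
        intro p
        exact Finset.card_filter _ _
      simp only [h1, h2]
      exact Finset.sum_comm
    rw [hswap]
    have hbound : ∀ p ∈ (Finset.univ ×ˢ Finset.univ : Finset (Fin n × Fin n)),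
        (Finset.univ.filter (fun a : Fin n =>
          p.1 ≠ p.2 ∧ c a p.1 = c a p.2 ∧ t ≤ (cls a (c a p.1)).card)).card ≤ s - 1 := by
      intro p _
      by_cases hp12 : p.1 = p.2
      · have : (Finset.univ.filter (fun a : Fin n =>
            p.1 ≠ p.2 ∧ c a p.1 = c a p.2 ∧ t ≤ (cls a (c a p.1)).card)) = ∅ := by
          apply Finset.filter_false_of_mem
          intro a _
          rw [not_and]
          intro h
          exact absurd hp12 h
        rw [this]
        simp
      · refine le_trans (Finset.card_le_card ?_) (hkey p.1 p.2 hp12)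
        intro a ha
        rw [Finset.mem_filter] at ha
        exact Finset.mem_filter.mpr ⟨Finset.mem_univ _, ha.2.2⟩
    refine le_trans (Finset.sum_le_card_nsmul _ _ (s-1) hbound) ?_
    rw [Finset.card_product, Finset.card_univ, Fintype.card_fin, smul_eq_mul]
    exact le_of_eq (by ring)
  -- pick a good row
  have hrow : ∃ a : Fin n, (PS a).card ≤ (s-1)*n := by
    by_contra hall
    push_neg at hall
    have : ∑ a : Fin n, (s-1)*n < ∑ a, (PS a).card := by
      apply Finset.sum_lt_sum_of_nonempty
      · have : Nonempty (Fin n) := ⟨⟨0, hn⟩⟩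
        exact Finset.univ_nonempty
      · intro a _
        exact hall a
    rw [Finset.sum_const, Finset.card_univ, Fintype.card_fin, smul_eq_mul] at this
    have heq : n*((s-1)*n) = (s-1)*(n*n) := by ring
    rw [heq] at this
    exact absurd (lt_of_lt_of_le this F4) (lt_irrefl _)
  obtain ⟨a, hrowa⟩ := hrow
  -- combine
  set cbig := k*(t-1) with hcbig
  have hchain : n*n ≤ k*(PS a).card + k*n + 2*n*cbig + cbig*cbig := by
    have h3 := F3 a
    have hsq : n*n ≤ (N a + cbig)*(N a + cbig) := Nat.mul_le_mul h3 h3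
    have hexpand : (N a + cbig)*(N a + cbig) = (N a)*(N a) + 2*((N a)*cbig) + cbig*cbig := by ring
    have h2 := F2 a
    have h1 := F1 a
    have hkN : k * SQ a ≤ k*(PS a).card + k*(N a) := by
      calc k * SQ a ≤ k*((PS a).card + N a) := Nat.mul_le_mul_left _ h1
        _ = k*(PS a).card + k*(N a) := by ring
    have h6 := F6 a
    have hNc : (N a)*cbig ≤ n*cbig := Nat.mul_le_mul_right _ h6
    have hkn : k*(N a) ≤ k*n := Nat.mul_le_mul_left _ h6
    rw [hexpand] at hsq
    linarith [hsq, h2, h1, hkN, hNc, hkn]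
  have hfin : n*n ≤ k*((s-1)*n) + k*n + 2*n*(k*(t-1)) + (k*(t-1))*(k*(t-1)) := by
    have hmul := Nat.mul_le_mul_left k hrowa
    rw [hcbig] at hchain
    linarith [hchain, hmul]
  -- relax subtractions
  have e1 : k*((s-1)*n) ≤ k*(s*n) := by
    apply Nat.mul_le_mul_left
    apply Nat.mul_le_mul_right
    omega
  have e2 : 2*n*(k*(t-1)) ≤ 2*n*(k*t) := by
    apply Nat.mul_le_mul_left
    apply Nat.mul_le_mul_left
    omega
  have e3 : (k*(t-1))*(k*(t-1)) ≤ (k*t)*(k*t) := by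
    apply Nat.mul_le_mul <;> apply Nat.mul_le_mul_left <;> omega
  have hfin2 : n*n ≤ k*(s*n) + k*n + 2*n*(k*t) + (k*t)*(k*t) := by
    refine le_trans hfin ?_
    exact add_le_add (add_le_add (add_le_add e1 le_rfl) e2) e3
  -- final contradiction via reals
  have hsR : (2:ℝ) ≤ (s:ℝ) := by exact_mod_cast hs
  have htsR : (s:ℝ) ≤ (t:ℝ) := by exact_mod_cast hst
  have htR : (2:ℝ) ≤ (t:ℝ) := le_trans hsR htsR
  have hkR : (1:ℝ) ≤ (k:ℝ) := by exact_mod_cast hk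
  have hnRpos : (0:ℝ) < (n:ℝ) := by exact_mod_cast hn
  have hnR : 8*(s:ℝ)*(t:ℝ)*(k:ℝ) < (n:ℝ) := by exact_mod_cast hcon
  have hfinR : (n:ℝ)*(n:ℝ) ≤ (k:ℝ)*((s:ℝ)*(n:ℝ)) + (k:ℝ)*(n:ℝ)
      + 2*(n:ℝ)*((k:ℝ)*(t:ℝ)) + ((k:ℝ)*(t:ℝ))*((k:ℝ)*(t:ℝ)) := by exact_mod_cast hfin2
  have h1 : 8*(s:ℝ)*(t:ℝ)*(k:ℝ)*(n:ℝ) < (n:ℝ)*(n:ℝ) :=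
    (mul_lt_mul_of_pos_right hnR hnRpos)
  have h2 : 16*((k:ℝ)*(t:ℝ)) ≤ 8*(s:ℝ)*(t:ℝ)*(k:ℝ) := by
    nlinarith [mul_nonneg (by positivity : (0:ℝ) ≤ 8*(k:ℝ)*(t:ℝ))
      (by linarith : (0:ℝ) ≤ (s:ℝ)-2)]
  have h3 : 16*((k:ℝ)*(t:ℝ)) < (n:ℝ) := lt_of_le_of_lt h2 hnR
  have hktnn : (0:ℝ) ≤ 16*((k:ℝ)*(t:ℝ)) := by positivity
  have h4 : (16*((k:ℝ)*(t:ℝ)))*(16*((k:ℝ)*(t:ℝ))) < (n:ℝ)*(n:ℝ) :=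
    mul_lt_mul'' h3 h3 hktnn hktnn
  have h5 : 16*((k:ℝ)*((s:ℝ)*(n:ℝ))) ≤ 8*(s:ℝ)*(t:ℝ)*(k:ℝ)*(n:ℝ) := by
    nlinarith [mul_nonneg (by positivity : (0:ℝ) ≤ 8*(k:ℝ)*(s:ℝ)*(n:ℝ))
      (by linarith : (0:ℝ) ≤ (t:ℝ)-2)]
  have hst4 : (4:ℝ) ≤ (s:ℝ)*(t:ℝ) := by
    nlinarith [mul_nonneg (by linarith : (0:ℝ) ≤ (s:ℝ)-2) (by linarith : (0:ℝ) ≤ (t:ℝ)-2)]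
  have h6 : 32*((k:ℝ)*(n:ℝ)) ≤ 8*(s:ℝ)*(t:ℝ)*(k:ℝ)*(n:ℝ) := by
    nlinarith [mul_nonneg (by positivity : (0:ℝ) ≤ 8*(k:ℝ)*(n:ℝ))
      (by linarith : (0:ℝ) ≤ (s:ℝ)*(t:ℝ)-4)]
  have h7 : 16*(2*(n:ℝ)*((k:ℝ)*(t:ℝ))) ≤ 2*(8*(s:ℝ)*(t:ℝ)*(k:ℝ)*(n:ℝ)) := by
    nlinarith [mul_nonneg (by positivity : (0:ℝ) ≤ 16*(n:ℝ)*(k:ℝ)*(t:ℝ))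
      (by linarith : (0:ℝ) ≤ (s:ℝ)-2)]
  have hnn : (0:ℝ) < (n:ℝ)*(n:ℝ) := by positivity
  linarith [hfinR, h1, h4, h5, h6, h7, hnn]

end EG
namespace EG

lemma arith_q (s t : ℕ) (hs : 2 ≤ s) (hst : s ≤ t) :
    s*t - s - t + 3 = s*t - (s+t-2) + 1 ∧ s*t - s - t + 2 = s*t - (s+t-1) + 1
    ∧ 1 ≤ s+t-2 ∧ s+t-2 ≤ s*t ∧ s+t-1 ≤ s*t ∧ s*t - s - t + 3 ≤ s*t := by
  obtain ⟨a, rfl⟩ : ∃ a, s = a + 2 := ⟨s - 2, by omega⟩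
  obtain ⟨b, rfl⟩ : ∃ b, t = b + 2 := ⟨t - 2, by omega⟩
  obtain ⟨Q, hQ⟩ : ∃ Q, (a+2)*(b+2) = Q := ⟨_, rfl⟩
  have h : Q = a*b + 2*a + 2*b + 4 := by rw [← hQ]; ring
  rw [hQ]
  obtain ⟨R, hR⟩ : ∃ R, a*b = R := ⟨_, rfl⟩
  rw [hR] at h
  omega

end EG

/-- `rBip n s t q` is the bipartite Erdős–Gyárfás function `r(K_{n,n}, K_{s,t}, q)`:
the minimum number of colors in an edge-coloring of `K_{n,n}` such that every copy of
`K_{s,t}` (with its part of size `s` in either side of the bipartition) receives at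
least `q` distinct colors on its edges. -/
noncomputable def rBip (n s t q : ℕ) : ℕ :=
  sInf {k : ℕ | ∃ c : Fin n → Fin n → ℕ,
    (∀ a b, c a b < k) ∧
    ∀ A B : Finset (Fin n),
      (A.card = s ∧ B.card = t) ∨ (A.card = t ∧ B.card = s) →
      q ≤ ((A ×ˢ B).image fun p => c p.1 p.2).card}

set_option maxHeartbeats 3200000 in
open EG in
/-- For `t ≥ s ≥ 2` and `q = st - s - t + 3`, `r(K_{n,n}, K_{s,t}, q) = Θ(n)` and
`r(K_{n,n}, K_{s,t}, q - 1) = O(n^{1 - 1/(s+t-1)})`. -/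
theorem stmt_2 (s t : ℕ) (hs : 2 ≤ s) (hst : s ≤ t) :
    ∃ c₁ c₂ C : ℝ, 0 < c₁ ∧ 0 < c₂ ∧ 0 < C ∧ ∃ n₀ : ℕ, ∀ n : ℕ, n₀ ≤ n →
      c₁ * (n : ℝ) ≤ (rBip n s t (s * t - s - t + 3) : ℝ) ∧
      (rBip n s t (s * t - s - t + 3) : ℝ) ≤ c₂ * (n : ℝ) ∧
      (rBip n s t (s * t - s - t + 2) : ℝ) ≤
        C * (n : ℝ) ^ ((1 : ℝ) - 1 / ((s : ℝ) + (t : ℝ) - 1)) := by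
  classical
  obtain ⟨ha1, ha2, ha3, ha4, ha5, ha6⟩ := arith_q s t hs hst
  obtain ⟨D2, hD2⟩ : ∃ d, d = s + t - 2 := ⟨_, rfl⟩
  obtain ⟨D3, hD3⟩ : ∃ d, d = s + t - 1 := ⟨_, rfl⟩
  rw [← hD2] at ha1 ha3 ha4
  rw [← hD3] at ha2 ha5
  obtain ⟨W2, hW2⟩ : ∃ w, w = Fintype.card (WT s t D2) := ⟨_, rfl⟩
  obtain ⟨W3, hW3⟩ : ∃ w, w = Fintype.card (WT s t D3) := ⟨_, rfl⟩
  obtain ⟨C2, hC2⟩ : ∃ cc, cc = 8*D2*W2 + 8 := ⟨_, rfl⟩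
  obtain ⟨M3, hM3⟩ : ∃ mm, mm = 8*D3*W3 + 8 := ⟨_, rfl⟩
  have hW2pos : 0 < W2 := by
    rw [hW2, hD2]
    apply Fintype.card_pos_iff.mpr
    exact ⟨((⟨0, by omega⟩, true), true, fun _ => ((⟨0, by omega⟩, ⟨0, by omega⟩),
      (⟨0, by omega⟩, ⟨0, by omega⟩)))⟩
  have hW3pos : 0 < W3 := by
    rw [hW3, hD3]
    apply Fintype.card_pos_iff.mpr
    exact ⟨((⟨0, by omega⟩, true), true, fun _ => ((⟨0, by omega⟩, ⟨0, by omega⟩),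
      (⟨0, by omega⟩, ⟨0, by omega⟩)))⟩
  have hC2pos0 : 0 < C2 := by
    rw [hC2]
    exact Nat.lt_of_lt_of_le (by norm_num) (Nat.le_add_left 8 (8*D2*W2))
  have hM3pos0 : 0 < M3 := by
    rw [hM3]
    exact Nat.lt_of_lt_of_le (by norm_num) (Nat.le_add_left 8 (8*D3*W3))
  have hsRpos : (0:ℝ) < (s:ℝ) := by exact_mod_cast (by omega : 0 < s)
  have htRpos : (0:ℝ) < (t:ℝ) := by exact_mod_cast (by omega : 0 < t)
  have hC2Rpos : (0:ℝ) < (C2:ℝ) := by exact_mod_cast hC2pos0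
  have hM3Rpos : (0:ℝ) < (M3:ℝ) := by exact_mod_cast hM3pos0
  refine ⟨1/(8*(s:ℝ)*(t:ℝ)), (C2:ℝ), 3*(M3:ℝ), by positivity,
    hC2Rpos, by positivity, 1, ?_⟩
  intro n hn
  have hn1 : 1 ≤ n := hn
  have hpow_split : n^(s-1)*n^(t-1) = n^(s+t-2) := by
    rw [← pow_add]
    congr 1
    omega
  have hpowpos : 1 ≤ n^(s+t-2) := Nat.one_le_pow _ _ (by omega)
  -- ===== upper bound for q =====
  have hbig2 : 4*(2*D2*(W2*(n^(s-1)*n^(t-1))) + 1) ≤ (C2*n)^D2 := by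
    rw [hpow_split]
    have lhs_eq : 4*(2*D2*(W2*(n^(s+t-2))) + 1) = 8*D2*W2*(n^(s+t-2)) + 4 := by ring
    rw [lhs_eq]
    have h1 : 8*D2*W2*(n^(s+t-2)) + 4 ≤ C2*(n^(s+t-2)) := by
      rw [hC2]
      have : (8*D2*W2 + 8)*(n^(s+t-2)) = 8*D2*W2*(n^(s+t-2)) + 8*(n^(s+t-2)) := by ring
      rw [this]
      have : 4 ≤ 8*(n^(s+t-2)) := by omega
      omega
    refine le_trans h1 ?_
    rw [mul_pow]
    have h2 : C2 ≤ C2^D2 := Nat.le_self_pow (by omega) _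
    have h3 : n^(s+t-2) = n^D2 := by rw [hD2]
    rw [h3]
    exact Nat.mul_le_mul_right _ h2
  have hC2pos : 0 < C2 := by
    rw [hC2]
    exact Nat.lt_of_lt_of_le (by norm_num) (Nat.le_add_left 8 (8*D2*W2))
  rw [hW2] at hbig2
  obtain ⟨c2, hc2lt, hc2grid⟩ := good_coloring n s t D2 (C2*n) (by omega) (by omega)
    (Nat.mul_pos hC2pos (by omega)) hbig2
  have hub2 : rBip n s t (s*t - s - t + 3) ≤ C2*n := by
    apply Nat.sInf_le
    refine ⟨c2, hc2lt, ?_⟩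
    intro A B hAB
    rw [ha1]
    exact hc2grid A B hAB
  -- ===== upper bound for q-1 =====
  obtain ⟨βR, hβR⟩ : ∃ b : ℝ, b = (s:ℝ) + (t:ℝ) - 1 := ⟨_, rfl⟩
  have hsR : (2:ℝ) ≤ (s:ℝ) := by exact_mod_cast hs
  have htR : (2:ℝ) ≤ (t:ℝ) := by
    have : (s:ℝ) ≤ (t:ℝ) := by exact_mod_cast hst
    linarith
  have hβpos : (0:ℝ) < βR := by rw [hβR]; linarith
  have hβcast : ((D3:ℕ):ℝ) = βR := by
    rw [hD3, hβR, Nat.cast_sub (by omega : 1 ≤ s + t)]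
    push_cast
    ring
  have hβcast2 : ((s+t-2:ℕ):ℝ) = βR - 1 := by
    rw [hβR, Nat.cast_sub (by omega : 2 ≤ s + t)]
    push_cast
    ring
  obtain ⟨α, hα⟩ : ∃ al : ℝ, al = (1:ℝ) - 1/((s:ℝ) + (t:ℝ) - 1) := ⟨_, rfl⟩
  obtain ⟨x, hx⟩ : ∃ y : ℝ, y = (n:ℝ) ^ α := ⟨_, rfl⟩
  have hα0 : 0 ≤ α := by
    rw [hα]
    have : 1/((s:ℝ)+(t:ℝ)-1) ≤ 1 := by
      rw [div_le_one (by linarith)]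
      linarith
    linarith
  have hnR1 : (1:ℝ) ≤ (n:ℝ) := by exact_mod_cast hn1
  have hx1 : (1:ℝ) ≤ x := by
    rw [hx]
    calc (1:ℝ) = (1:ℝ) ^ α := (Real.one_rpow α).symm
      _ ≤ (n:ℝ) ^ α := Real.rpow_le_rpow (by norm_num) hnR1 hα0
  have hx0 : (0:ℝ) ≤ x := by linarith
  have hxpow : x^(D3:ℕ) = (n:ℝ)^((s+t-2:ℕ)) := by
    rw [hx, ← Real.rpow_natCast ((n:ℝ)^α) D3, ← Real.rpow_mul (by positivity),
      ← Real.rpow_natCast (n:ℝ) (s+t-2)]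
    congr 1
    rw [hβcast, hβcast2, hα]
    have hβne : βR ≠ 0 := ne_of_gt hβpos
    have : ((s:ℝ) + (t:ℝ) - 1) = βR := by rw [hβR]
    rw [this]
    field_simp
  obtain ⟨k3, hk3⟩ : ∃ kk : ℕ, kk = M3 * (⌈x⌉₊ + 1) := ⟨_, rfl⟩
  have hceil : x ≤ (⌈x⌉₊ : ℝ) := Nat.le_ceil x
  have hnatpow : n^(s+t-2) ≤ (⌈x⌉₊ + 1)^D3 := by
    have hle1 : ((n:ℝ))^((s+t-2:ℕ)) ≤ ((⌈x⌉₊ + 1 : ℕ):ℝ)^(D3:ℕ) := by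
      rw [← hxpow]
      apply pow_le_pow_left₀ hx0
      push_cast
      linarith
    exact_mod_cast hle1
  have hbig3 : 4*(2*D3*(W3*(n^(s-1)*n^(t-1))) + 1) ≤ k3^D3 := by
    rw [hpow_split]
    have lhs_eq : 4*(2*D3*(W3*(n^(s+t-2))) + 1) = 8*D3*W3*(n^(s+t-2)) + 4 := by ring
    rw [lhs_eq]
    have h1 : 8*D3*W3*(n^(s+t-2)) + 4 ≤ M3*(n^(s+t-2)) := by
      rw [hM3]
      have heq : (8*D3*W3 + 8)*(n^(s+t-2)) = 8*D3*W3*(n^(s+t-2)) + 8*(n^(s+t-2)) := by ring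
      rw [heq]
      omega
    refine le_trans h1 ?_
    rw [hk3, mul_pow]
    have h2 : M3 ≤ M3^D3 := Nat.le_self_pow (by omega) _
    calc M3*(n^(s+t-2)) ≤ M3*((⌈x⌉₊ + 1)^D3) := Nat.mul_le_mul_left _ hnatpow
      _ ≤ M3^D3*((⌈x⌉₊ + 1)^D3) := Nat.mul_le_mul_right _ h2
  have hM3pos : 0 < M3 := by
    rw [hM3]
    exact Nat.lt_of_lt_of_le (by norm_num) (Nat.le_add_left 8 (8*D3*W3))
  rw [hW3] at hbig3
  obtain ⟨c3, hc3lt, hc3grid⟩ := good_coloring n s t D3 k3 (by omega) (by omega)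
    (by rw [hk3]; exact Nat.mul_pos hM3pos (by omega)) hbig3
  have hub3 : rBip n s t (s*t - s - t + 2) ≤ k3 := by
    apply Nat.sInf_le
    refine ⟨c3, hc3lt, ?_⟩
    intro A B hAB
    rw [ha2]
    exact hc3grid A B hAB
  have hub3R : (rBip n s t (s*t - s - t + 2) : ℝ) ≤ 3*(M3:ℝ) * x := by
    have hk3R : (k3:ℝ) ≤ 3*(M3:ℝ)*x := by
      rw [hk3]
      push_cast
      have hceil2 : (⌈x⌉₊:ℝ) ≤ x + 1 := le_of_lt (Nat.ceil_lt_add_one hx0)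
      have hM3R : (1:ℝ) ≤ (M3:ℝ) := by
        have : 1 ≤ M3 := by omega
        exact_mod_cast this
      nlinarith
    have : (rBip n s t (s*t - s - t + 2) : ℝ) ≤ (k3:ℝ) := by exact_mod_cast hub3
    linarith
  -- ===== lower bound =====
  have hne : {k : ℕ | ∃ c : Fin n → Fin n → ℕ,
      (∀ a b, c a b < k) ∧
      ∀ A B : Finset (Fin n),
        (A.card = s ∧ B.card = t) ∨ (A.card = t ∧ B.card = s) →
        (s*t - s - t + 3) ≤ ((A ×ˢ B).image fun p => c p.1 p.2).card}.Nonempty := by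
    refine ⟨n*n, fun a b => cellOrd (a, b), fun a b => (finProdFinEquiv (a,b)).isLt, ?_⟩
    intro A B hAB
    have himg : ((A ×ˢ B).image fun p => cellOrd (p.1, p.2)).card = (A ×ˢ B).card := by
      have heta : (fun p : Fin n × Fin n => cellOrd (p.1, p.2)) = cellOrd := rfl
      rw [heta]
      exact Finset.card_image_of_injective _ cellOrd_inj
    rw [himg, Finset.card_product]
    rcases hAB with ⟨hA, hB⟩ | ⟨hA, hB⟩
    · rw [hA, hB]; exact ha6
    · rw [hA, hB, Nat.mul_comm t s]; exact ha6
  have hmem := Nat.sInf_mem hne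
  obtain ⟨cl, hcllt, hclgrid⟩ := hmem
  have hlow := lower_bound n s t hs hst _ cl hcllt hclgrid
  have hlowR : (1/(8*(s:ℝ)*(t:ℝ))) * (n:ℝ) ≤ (rBip n s t (s*t - s - t + 3) : ℝ) := by
    have h8 : (0:ℝ) < 8*(s:ℝ)*(t:ℝ) := by positivity
    rw [div_mul_eq_mul_div, one_mul, div_le_iff₀ h8]
    have : (n:ℝ) ≤ (8*s*t*(rBip n s t (s*t - s - t + 3)) : ℕ) := by exact_mod_cast hlow
    push_cast at this
    linarith
  refine ⟨hlowR, ?_, ?_⟩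
  · have : (rBip n s t (s*t - s - t + 3) : ℝ) ≤ ((C2*n : ℕ):ℝ) := by exact_mod_cast hub2
    push_cast at this
    linarith
  · rw [← hα, ← hx]
    exact hub3R
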